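/- Let φ : ℝ → ℝ be a differentiable function with φ(x) ≠ 0 for all x satisfying the differential equation φ'(x) = (φ(x) − 1)/φ(x). Let c ∈ ℝ and let v : ℤ → ℝ → ℝ be a family of differentiable functions satisfying for all n ∈ ℤ and t ∈ ℝ the equation v̇_n = φ(v_{n+2} − v_{n+1}) φ(v_n − v_{n−1}) + φ(v_{n+1} − v_n) φ(v_{n−1} − v_{n−2}) + φ(v_{n+1} − v_n) φ(v_n − v_{n−1}) + c. Define u_n(t) = φ(v_{n+1}(t) − v_n(t)) − 1. Then for all n ∈ ℤ and t ∈ ℝ, u̇_n = u_n (u_{n+2} + u_{n+1} − u_{n−1} − u_{n−2}), i.e., u solves the INB equation. -/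

import Mathlib

/-- Equation `v̇ₙ = φ(v_{n+2}−v_{n+1})φ(vₙ−v_{n−1}) + φ(v_{n+1}−vₙ)φ(v_{n−1}−v_{n−2})
+ φ(v_{n+1}−vₙ)φ(vₙ−v_{n−1}) + c`, where `φ' = (φ−1)/φ`, is transformed into the
INB equation by `uₙ = φ(v_{n+1} − vₙ) − 1`. -/
theorem stmt_4 (φ : ℝ → ℝ)
    (hφne : ∀ x : ℝ, φ x ≠ 0)
    (hφ : ∀ x : ℝ, HasDerivAt φ ((φ x - 1) / φ x) x)
    (c : ℝ) (v : ℤ → ℝ → ℝ)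
    (hv : ∀ (n : ℤ) (t : ℝ), HasDerivAt (v n)
      (φ (v (n + 2) t - v (n + 1) t) * φ (v n t - v (n - 1) t)
        + φ (v (n + 1) t - v n t) * φ (v (n - 1) t - v (n - 2) t)
        + φ (v (n + 1) t - v n t) * φ (v n t - v (n - 1) t) + c) t)
    (u : ℤ → ℝ → ℝ)
    (hu : ∀ (n : ℤ) (t : ℝ), u n t = φ (v (n + 1) t - v n t) - 1) :
    ∀ (n : ℤ) (t : ℝ), HasDerivAt (u n)
      (u n t * (u (n + 2) t + u (n + 1) t - u (n - 1) t - u (n - 2) t)) t := by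
  intro n t
  have h1 := hv (n + 1) t
  have h2 := hv n t
  simp only [show n + 1 + 2 = n + 3 by ring, show n + 1 + 1 = n + 2 by ring,
    show n + 1 - 1 = n by ring, show n + 1 - 2 = n - 1 by ring] at h1
  have hd := ((hφ (v (n + 1) t - v n t)).comp t (h1.sub h2)).sub_const 1
  have hfun : u n = fun s => φ (v (n + 1) s - v n s) - 1 := funext (hu n)
  rw [hfun]
  refine hd.congr_deriv (Eq.symm ?_)
  simp only [hu, show n + 2 + 1 = n + 3 by ring, show n - 1 + 1 = n by ring,
    show n - 2 + 1 = n - 1 by ring, Function.comp]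
  rw [div_mul_eq_mul_div, eq_div_iff (hφne _)]
  ring
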